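/- arXiv:2206.01995 — 3 statements merged into one kernel-verified Lean document; each statement's English description precedes it below -/
import Mathlib

section
/- Let d ≥ 1 and let v = (v_1, ..., v_d) be a unit vector in R^d (i.e., ‖v‖_2 = 1), and let n ≥ 3 be an integer with d ≤ n - 1. Set n_0 = sqrt(n-2) + 1/(2*sqrt(n-2)). If |v_1| ≥ n_0 / sqrt(n_0^2 + 1), then for every x = (x_1, ..., x_d) ∈ {0,1}^d with x_1 = 1, we have |⟨x, v⟩| ≥ 1 / sqrt(4n^2 - 8n + 1). -/
open Finset

theorem stmt0 (d n : ℕ) (hd : 1 ≤ d) (hn : 3 ≤ n) (hdn : d ≤ n - 1)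
    (v : Fin d → ℝ) (hv : Real.sqrt (∑ i, v i ^ 2) = 1)
    (n₀ : ℝ) (hn₀ : n₀ = Real.sqrt ((n : ℝ) - 2) + 1 / (2 * Real.sqrt ((n : ℝ) - 2)))
    (hv1 : n₀ / Real.sqrt (n₀ ^ 2 + 1) ≤ |v ⟨0, hd⟩|)
    (x : Fin d → ℝ) (hx : ∀ i, x i = 0 ∨ x i = 1) (hx1 : x ⟨0, hd⟩ = 1) :
    1 / Real.sqrt (4 * (n : ℝ) ^ 2 - 8 * n + 1) ≤ |∑ i, x i * v i| := by
  set i0 : Fin d := ⟨0, hd⟩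
  set m : ℝ := (n : ℝ) - 2 with hmdef
  have hm1 : (1 : ℝ) ≤ m := by
    have : (3 : ℝ) ≤ (n : ℝ) := by exact_mod_cast hn
    simp only [hmdef]; linarith
  have hm0 : (0 : ℝ) < m := by linarith
  set K : ℝ := 4 * (n : ℝ) ^ 2 - 8 * n + 1 with hKdef
  have hKm : K = 4 * m ^ 2 + 8 * m + 1 := by simp only [hKdef, hmdef]; ring
  have hK0 : (0 : ℝ) < K := by nlinarith
  have hsK : (0 : ℝ) < Real.sqrt K := Real.sqrt_pos.mpr hK0
  have hsKsq : Real.sqrt K ^ 2 = K := Real.sq_sqrt hK0.le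
  -- sum of squares is 1
  have hsum1 : ∑ i, v i ^ 2 = 1 := by
    have h0 : (0:ℝ) ≤ ∑ i, v i ^ 2 := by positivity
    nlinarith [Real.sq_sqrt h0, hv]
  -- n₀ facts
  have hsm : Real.sqrt m ^ 2 = m := Real.sq_sqrt hm0.le
  have hsm0 : (0 : ℝ) < Real.sqrt m := Real.sqrt_pos.mpr hm0
  have hn0sq : n₀ ^ 2 = (2*m+1)^2 / (4*m) := by
    rw [hn₀]; field_simp
    linear_combination (4*(4*m*Real.sqrt m^2 - 1)) * hsm
  have hn0pos : 0 < n₀ := by rw [hn₀]; positivity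
  have hden : n₀ ^ 2 + 1 = K / (4*m) := by
    rw [hn0sq, hKm]; field_simp; ring
  have hdenpos : (0:ℝ) < n₀ ^ 2 + 1 := by positivity
  -- |v i0| ≥ (2m+1)/√K
  have hAB : n₀ / Real.sqrt (n₀ ^ 2 + 1) = (2*m+1) / Real.sqrt K := by
    have hA0 : 0 ≤ n₀ / Real.sqrt (n₀ ^ 2 + 1) := by positivity
    have hB0 : 0 ≤ (2*m+1) / Real.sqrt K := by positivity
    have hsq : (n₀ / Real.sqrt (n₀ ^ 2 + 1))^2 = ((2*m+1) / Real.sqrt K)^2 := by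
      rw [div_pow, div_pow, Real.sq_sqrt hdenpos.le, hsKsq, hden, hn0sq]
      field_simp
    calc n₀ / Real.sqrt (n₀ ^ 2 + 1)
        = Real.sqrt ((n₀ / Real.sqrt (n₀ ^ 2 + 1))^2) := (Real.sqrt_sq hA0).symm
      _ = Real.sqrt (((2*m+1) / Real.sqrt K)^2) := by rw [hsq]
      _ = (2*m+1) / Real.sqrt K := Real.sqrt_sq hB0
  have hkey : (2*m+1) / Real.sqrt K ≤ |v i0| := hAB ▸ hv1
  -- v i0 squared lower bound
  have hv1sq : (2*m+1)^2 / K ≤ (v i0)^2 := by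
    have := sq_le_sq' (by linarith [abs_nonneg (v i0), hkey, (by positivity : (0:ℝ) ≤ (2*m+1)/Real.sqrt K)] : -(|v i0|) ≤ (2*m+1)/Real.sqrt K) hkey
    calc (2*m+1)^2 / K = ((2*m+1) / Real.sqrt K)^2 := by rw [div_pow, hsKsq]
      _ ≤ |v i0|^2 := this
      _ = (v i0)^2 := sq_abs _
  -- tail sum of squares
  set s := (univ : Finset (Fin d)).erase i0 with hs
  have hsplit : ∀ f : Fin d → ℝ, ∑ i, f i = f i0 + ∑ i ∈ s, f i := by
    intro f
    rw [hs, ← Finset.add_sum_erase _ f (mem_univ i0)]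
  have hT : ∑ i ∈ s, v i ^ 2 ≤ 4*m/K := by
    have h := hsplit (fun i => v i ^ 2)
    rw [hsum1] at h
    have : ∑ i ∈ s, v i ^ 2 = 1 - (v i0)^2 := by linarith
    rw [this]
    have : (2*m+1)^2 / K = 1 - 4*m/K := by field_simp [hKm]; ring
    linarith [hv1sq, this ▸ hv1sq]
  -- Cauchy-Schwarz on tail
  have hcard : (s.card : ℝ) ≤ m := by
    have : s.card = d - 1 := by rw [hs, Finset.card_erase_of_mem (mem_univ i0), Finset.card_univ, Fintype.card_fin]
    rw [this]
    have h1 : d - 1 ≤ n - 2 := by omega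
    have h2 : ((n:ℝ) - 2) = ((n - 2 : ℕ) : ℝ) := by
      have : (2:ℕ) ≤ n := by omega
      push_cast [Nat.cast_sub this]; ring
    rw [hmdef, h2]
    exact_mod_cast h1
  have hCS : (∑ i ∈ s, |v i|) ^ 2 ≤ m * (4*m/K) := by
    calc (∑ i ∈ s, |v i|) ^ 2 ≤ s.card * ∑ i ∈ s, |v i| ^ 2 := sq_sum_le_card_mul_sum_sq
      _ = s.card * ∑ i ∈ s, v i ^ 2 := by simp [sq_abs]
      _ ≤ m * (4*m/K) := by
          apply mul_le_mul hcard hT (by positivity)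
          linarith
  -- bound on tail inner product
  have hSle : |∑ i ∈ s, x i * v i| ≤ 2*m / Real.sqrt K := by
    have h1 : |∑ i ∈ s, x i * v i| ≤ ∑ i ∈ s, |v i| := by
      refine le_trans (Finset.abs_sum_le_sum_abs _ _) (Finset.sum_le_sum ?_)
      intro i _
      rw [abs_mul]
      rcases hx i with h | h <;> simp [h]
    have h2 : ∑ i ∈ s, |v i| ≤ 2*m / Real.sqrt K := by
      have hnn : 0 ≤ ∑ i ∈ s, |v i| := Finset.sum_nonneg fun i _ => abs_nonneg _
      have heq : (2*m / Real.sqrt K)^2 = m * (4*m/K) := by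
        rw [div_pow, hsKsq]; ring
      have hCS' : (∑ i ∈ s, |v i|) ^ 2 ≤ (2*m / Real.sqrt K)^2 := heq ▸ hCS
      calc ∑ i ∈ s, |v i| = Real.sqrt ((∑ i ∈ s, |v i|)^2) := (Real.sqrt_sq hnn).symm
        _ ≤ Real.sqrt ((2*m / Real.sqrt K)^2) := Real.sqrt_le_sqrt hCS'
        _ = 2*m / Real.sqrt K := Real.sqrt_sq (by positivity)
    linarith
  -- finish
  have hsplit2 : ∑ i, x i * v i = v i0 + ∑ i ∈ s, x i * v i := by
    rw [hsplit (fun i => x i * v i), hx1, one_mul]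
  rw [hsplit2]
  have habs : |v i0| - |∑ i ∈ s, x i * v i| ≤ |v i0 + ∑ i ∈ s, x i * v i| := by
    have := abs_sub_abs_le_abs_sub (v i0) (-(∑ i ∈ s, x i * v i))
    simpa [sub_neg_eq_add] using this
  have : 1 / Real.sqrt K = (2*m+1)/Real.sqrt K - 2*m/Real.sqrt K := by ring
  linarith [hkey, hSle, habs, this]
end

section
/- In a binary linear model on a DAG with monotone activation (each node X becomes active with probability f_X(θ*_X · pa(X)) where every f_X is monotonically non-decreasing and all parameters θ* are nonnegative), the expected value of the sink node Y is monotone in the intervention: for any set S of nodes and any node X ∉ S ∪ {Y}, E[Y | do(S = 1)] ≤ E[Y | do(S ∪ {X} = 1)]. -/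
open MeasureTheory Classical

/-- The set of activated nodes in the threshold formulation of a BGLM on a DAG:
a node `X` is active iff it is intervened upon (`X ∈ S`) or its threshold `γ X` is at
most `f X` applied to the total incoming weight from its active parents.  Defined by
well-founded recursion along the (acyclic) parent relation `E`. -/
noncomputable def activeSet {V : Type*} [Fintype V]
    (E : V → V → Prop) (hwf : WellFounded E)
    (f : V → ℝ → ℝ) (θ : V → V → ℝ) (γ : V → ℝ) (S : Finset V) : V → Prop :=
  hwf.fix (fun X rec =>
    X ∈ S ∨ γ X ≤ f X (∑ Z : V, if h : E Z X then (if rec Z h then θ Z X else 0) else 0))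

lemma activeSet_def {V : Type*} [Fintype V]
    (E : V → V → Prop) (hwf : WellFounded E)
    (f : V → ℝ → ℝ) (θ : V → V → ℝ) (γ : V → ℝ) (S : Finset V) (X : V) :
    activeSet E hwf f θ γ S X ↔
      X ∈ S ∨ γ X ≤ f X (∑ Z : V, if E Z X then
        (if activeSet E hwf f θ γ S Z then θ Z X else 0) else 0) := by
  unfold activeSet
  rw [hwf.fix_eq]
  simp only [dite_eq_ite]

lemma activeSet_mono {V : Type*} [Fintype V]
    (E : V → V → Prop) (hwf : WellFounded E)
    (f : V → ℝ → ℝ) (hf : ∀ X, Monotone (f X))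
    (θ : V → V → ℝ) (hθ : ∀ a b, 0 ≤ θ a b)
    (γ : V → ℝ) (S T : Finset V) (hST : S ⊆ T) :
    ∀ X, activeSet E hwf f θ γ S X → activeSet E hwf f θ γ T X := by
  intro X
  induction X using hwf.induction with
  | _ X ih =>
    rw [activeSet_def, activeSet_def]
    rintro (h | h)
    · exact Or.inl (hST h)
    · refine Or.inr (h.trans (hf X ?_))
      apply Finset.sum_le_sum
      intro Z _
      by_cases hZ : E Z X
      · simp only [hZ, if_true]
        by_cases hA : activeSet E hwf f θ γ S Z
        · simp [hA, ih Z hZ hA]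
        · simp only [hA, if_false]
          split
          · exact hθ Z X
          · exact le_rfl
      · simp [hZ]

lemma activeSet_measurable {V : Type*} [Fintype V] {Ω : Type*} [MeasurableSpace Ω]
    (E : V → V → Prop) (hwf : WellFounded E)
    (f : V → ℝ → ℝ) (hf : ∀ X, Monotone (f X))
    (θ : V → V → ℝ)
    (γ : Ω → V → ℝ) (hγ : ∀ X, Measurable (fun ω => γ ω X))
    (S : Finset V) :
    ∀ X, MeasurableSet {ω | activeSet E hwf f θ (γ ω) S X} := by
  intro X
  induction X using hwf.induction with
  | _ X ih =>
    have : {ω | activeSet E hwf f θ (γ ω) S X} =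
        {ω | X ∈ S ∨ γ ω X ≤ f X (∑ Z : V, if E Z X then
          (if activeSet E hwf f θ (γ ω) S Z then θ Z X else 0) else 0)} := by
      ext ω; exact activeSet_def E hwf f θ (γ ω) S X
    rw [this]
    by_cases hS : X ∈ S
    · simp [hS]
    · simp only [hS, false_or]
      have hg : Measurable (fun ω => f X (∑ Z : V, if E Z X then
          (if activeSet E hwf f θ (γ ω) S Z then θ Z X else 0) else 0)) := by
        apply (hf X).measurable.comp
        apply Finset.measurable_sum
        intro Z _
        by_cases hZ : E Z X
        · simp only [hZ, if_true]
          exact Measurable.ite (ih Z hZ) measurable_const measurable_const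
        · simp [hZ]
      exact measurableSet_le (hγ X) hg

theorem stmt12 {V : Type*} [Fintype V] {Ω : Type*} [MeasurableSpace Ω]
    (μ : Measure Ω) [IsProbabilityMeasure μ]
    (E : V → V → Prop) (hwf : WellFounded E)
    (f : V → ℝ → ℝ) (hf : ∀ X, Monotone (f X))
    (θ : V → V → ℝ) (hθ : ∀ a b, 0 ≤ θ a b)
    (γ : Ω → V → ℝ) (hγ : ∀ X, Measurable (fun ω => γ ω X))
    (S : Finset V) (X Y : V) (hX : X ∉ S) (hXY : X ≠ Y) :
    ∫ ω, (if activeSet E hwf f θ (γ ω) S Y then (1 : ℝ) else 0) ∂μ ≤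
      ∫ ω, (if activeSet E hwf f θ (γ ω) (insert X S) Y then (1 : ℝ) else 0) ∂μ := by
  have hmeas : ∀ T : Finset V,
      Integrable (fun ω => if activeSet E hwf f θ (γ ω) T Y then (1 : ℝ) else 0) μ := by
    intro T
    have hm : Measurable (fun ω => if activeSet E hwf f θ (γ ω) T Y then (1 : ℝ) else 0) :=
      Measurable.ite (activeSet_measurable E hwf f hf θ γ hγ T Y)
        measurable_const measurable_const
    refine ⟨hm.aestronglyMeasurable, ?_⟩
    apply HasFiniteIntegral.mono' (g := fun _ => (1:ℝ)) (integrable_const 1).hasFiniteIntegral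
    filter_upwards with ω
    split <;> simp
  refine integral_mono (hmeas S) (hmeas (insert X S)) ?_
  intro ω
  have := activeSet_mono E hwf f hf θ hθ (γ ω) S (insert X S)
    (Finset.subset_insert X S) Y
  by_cases h : activeSet E hwf f θ (γ ω) S Y
  · simp [h, this h]
  · simp only [h, if_false]
    split <;> norm_num
end

section
/- Let θ_1, θ_2 ∈ R^d and let G(θ) = Σ_{i=1}^t (f(V_iᵀθ) - f(V_iᵀθ*)) V_i, where f: R → R is continuously differentiable with derivative bounded below by κ > 0, V_i ∈ R^d, and M = Σ_{i=1}^t V_i V_iᵀ is positive definite. Then ‖G(θ_1)‖²_{M^{-1}} ≥ κ² λ_min(M) ‖θ_1 - θ*‖²_2. -/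
open Matrix Finset

-- Cauchy-Schwarz for a real PSD matrix
lemma psd_cauchy_schwarz {d : ℕ} {A : Matrix (Fin d) (Fin d) ℝ} (hA : A.PosSemidef)
    (x y : Fin d → ℝ) :
    (x ⬝ᵥ (A *ᵥ y)) ^ 2 ≤ (x ⬝ᵥ (A *ᵥ x)) * (y ⬝ᵥ (A *ᵥ y)) := by
  have hT : Aᵀ = A := by
    have h := hA.1
    simp [Matrix.conjTranspose_eq_transpose_of_trivial] at h
    exact h
  have hsym : ∀ u v : Fin d → ℝ, u ⬝ᵥ (A *ᵥ v) = v ⬝ᵥ (A *ᵥ u) := by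
    intro u v
    rw [Matrix.dotProduct_mulVec, ← Matrix.mulVec_transpose, dotProduct_comm, hT]
  have hq : ∀ s : ℝ, 0 ≤ (x ⬝ᵥ (A *ᵥ x)) * (s * s) + 2 * (x ⬝ᵥ (A *ᵥ y)) * s
      + (y ⬝ᵥ (A *ᵥ y)) := by
    intro s
    have := hA.dotProduct_mulVec_nonneg (s • x + y)
    simp only [star_trivial, Matrix.mulVec_add, Matrix.mulVec_smul, add_dotProduct,
      dotProduct_add, smul_dotProduct, dotProduct_smul, smul_eq_mul, hsym y x] at this
    nlinarith [this]
  have := discrim_le_zero hq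
  unfold discrim at this
  nlinarith [this]

lemma eigen_lower_bound {d : ℕ} (hd : 0 < d) {M : Matrix (Fin d) (Fin d) ℝ}
    (hM : M.IsHermitian) (w : Fin d → ℝ) :
    (Finset.univ.inf'
        (by haveI : NeZero d := ⟨hd.ne'⟩; exact Finset.univ_nonempty) hM.eigenvalues)
      * (w ⬝ᵥ w) ≤ w ⬝ᵥ (M *ᵥ w) := by
  haveI : NeZero d := ⟨hd.ne'⟩
  set U : Matrix (Fin d) (Fin d) ℝ := (hM.eigenvectorUnitary : Matrix (Fin d) (Fin d) ℝ) with hU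
  have hUU : star U * U = 1 := (Matrix.mem_unitaryGroup_iff').mp hM.eigenvectorUnitary.2
  have hUU' : U * star U = 1 := (Matrix.mem_unitaryGroup_iff).mp hM.eigenvectorUnitary.2
  set y : Fin d → ℝ := star U *ᵥ w with hy
  have hwy : U *ᵥ y = w := by
    rw [hy, Matrix.mulVec_mulVec, hUU', Matrix.one_mulVec]
  have hstar : star U = Uᵀ := by
    simp [Matrix.star_eq_conjTranspose, Matrix.conjTranspose_eq_transpose_of_trivial]
  have hvm : w ᵥ* U = y := by
    rw [hy, hstar, ← Matrix.vecMul_transpose, Matrix.transpose_transpose]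
  have hdot : ∀ z : Fin d → ℝ, w ⬝ᵥ (U *ᵥ z) = y ⬝ᵥ z := by
    intro z
    rw [Matrix.dotProduct_mulVec, hvm]
  have h1 : w ⬝ᵥ w = y ⬝ᵥ y := by
    calc w ⬝ᵥ w = w ⬝ᵥ (U *ᵥ y) := by rw [hwy]
      _ = y ⬝ᵥ y := hdot y
  have h2 : w ⬝ᵥ (M *ᵥ w) = ∑ i, hM.eigenvalues i * (y i) ^ 2 := by
    conv_lhs => rw [hM.spectral_theorem, Unitary.conjStarAlgAut_apply]
    rw [← Matrix.mulVec_mulVec, ← Matrix.mulVec_mulVec, hdot]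
    simp [dotProduct, Matrix.mulVec_diagonal, pow_two]
    ring_nf
    exact Finset.sum_congr rfl fun i _ => by ring
  rw [h1, h2, dotProduct]
  rw [Finset.mul_sum]
  refine Finset.sum_le_sum fun i _ => ?_
  have h3 : (Finset.univ.inf' Finset.univ_nonempty hM.eigenvalues) ≤ hM.eigenvalues i :=
    Finset.inf'_le _ (Finset.mem_univ i)
  have h4 : (0:ℝ) ≤ y i * y i := mul_self_nonneg _
  calc _ ≤ hM.eigenvalues i * (y i * y i) := by nlinarith
    _ = hM.eigenvalues i * (y i)^2 := by ring

lemma dp_sum {n ι : Type*} [Fintype n] (s : Finset ι) (w : n → ℝ) (x : ι → n → ℝ) :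
    w ⬝ᵥ (∑ i ∈ s, x i) = ∑ i ∈ s, w ⬝ᵥ x i := by
  simp only [dotProduct, Finset.sum_apply, Finset.mul_sum]
  exact Finset.sum_comm

lemma sum_dp {n ι : Type*} [Fintype n] (s : Finset ι) (w : n → ℝ) (x : ι → n → ℝ) :
    (∑ i ∈ s, x i) ⬝ᵥ w = ∑ i ∈ s, x i ⬝ᵥ w := by
  rw [dotProduct_comm, dp_sum]
  exact Finset.sum_congr rfl fun i _ => dotProduct_comm _ _

lemma sum_mv {n ι : Type*} [Fintype n] [DecidableEq n] (s : Finset ι) (w : n → ℝ)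
    (A : ι → Matrix n n ℝ) : (∑ i ∈ s, A i) *ᵥ w = ∑ i ∈ s, (A i *ᵥ w) := by
  ext j
  simp only [Matrix.mulVec, dotProduct, Finset.sum_apply, Matrix.sum_apply,
    Finset.sum_mul]
  exact Finset.sum_comm

lemma vmv_mv {n : Type*} [Fintype n] (u v w : n → ℝ) :
    Matrix.vecMulVec u v *ᵥ w = (v ⬝ᵥ w) • u := by
  ext j
  simp [Matrix.mulVec, dotProduct, Matrix.vecMulVec_apply, Finset.mul_sum, mul_comm,
    mul_left_comm, smul_eq_mul]

-- MVT helper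
lemma mvt_helper (f f' : ℝ → ℝ) (hf : ∀ x, HasDerivAt f (f' x) x)
    (κ : ℝ) (hf' : ∀ x, κ ≤ f' x) (a b : ℝ) :
    ∃ c, κ ≤ c ∧ f a - f b = c * (a - b) := by
  rcases lt_trichotomy a b with h | h | h
  · obtain ⟨c, _, hc⟩ := exists_hasDerivAt_eq_slope f f' h
      (fun x _ => (hf x).continuousAt.continuousWithinAt) (fun x _ => hf x)
    refine ⟨f' c, hf' c, ?_⟩
    rw [eq_div_iff (by linarith : b - a ≠ 0)] at hc
    linarith [hc]
  · exact ⟨f' a, hf' a, by rw [h]; ring⟩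
  · obtain ⟨c, _, hc⟩ := exists_hasDerivAt_eq_slope f f' h
      (fun x _ => (hf x).continuousAt.continuousWithinAt) (fun x _ => hf x)
    refine ⟨f' c, hf' c, ?_⟩
    rw [eq_div_iff (show a - b ≠ 0 by linarith)] at hc
    linarith [hc]

theorem stmt16 (d t : ℕ) (hd : 0 < d) (f f' : ℝ → ℝ)
    (hf : ∀ x, HasDerivAt f (f' x) x)
    (κ : ℝ) (hκ : 0 < κ) (hf' : ∀ x, κ ≤ f' x)
    (V : Fin t → Fin d → ℝ) (θstar θ₁ : Fin d → ℝ)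
    (M : Matrix (Fin d) (Fin d) ℝ)
    (hMdef : M = ∑ i, Matrix.vecMulVec (V i) (V i)) (hM : M.PosDef) :
    κ ^ 2 *
        (Finset.univ.inf'
          (by haveI : NeZero d := ⟨hd.ne'⟩; exact Finset.univ_nonempty) hM.1.eigenvalues) *
        (∑ j, (θ₁ j - θstar j) ^ 2) ≤
      (∑ i, (f (V i ⬝ᵥ θ₁) - f (V i ⬝ᵥ θstar)) • V i) ⬝ᵥ
        (M⁻¹ *ᵥ (∑ i, (f (V i ⬝ᵥ θ₁) - f (V i ⬝ᵥ θstar)) • V i)) := by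
  haveI : NeZero d := ⟨hd.ne'⟩
  set lmin : ℝ := Finset.univ.inf' Finset.univ_nonempty hM.1.eigenvalues with hlmin
  set w : Fin d → ℝ := fun j => θ₁ j - θstar j with hw
  set G : Fin d → ℝ := ∑ i, (f (V i ⬝ᵥ θ₁) - f (V i ⬝ᵥ θstar)) • V i with hG
  have hMinv : (M⁻¹).PosDef := hM.inv
  have hMinvPS : (M⁻¹).PosSemidef := hMinv.posSemidef
  have hMinvM : M⁻¹ * M = 1 := Matrix.nonsing_inv_mul M hM.det_pos.ne'.isUnit
  -- basic nonnegativity of RHS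
  have hRnonneg : 0 ≤ G ⬝ᵥ (M⁻¹ *ᵥ G) := by
    have := hMinvPS.dotProduct_mulVec_nonneg G
    simpa using this
  -- w dot products
  have hVw : ∀ i, V i ⬝ᵥ θ₁ - V i ⬝ᵥ θstar = V i ⬝ᵥ w := by
    intro i
    simp [hw, dotProduct, ← Finset.sum_sub_distrib, mul_sub]
  -- MVT coefficients
  have hgex : ∀ i : Fin t, ∃ c, κ ≤ c ∧
      f (V i ⬝ᵥ θ₁) - f (V i ⬝ᵥ θstar) = c * (V i ⬝ᵥ w) := by
    intro i
    obtain ⟨c, hc1, hc2⟩ := mvt_helper f f' hf κ hf' (V i ⬝ᵥ θ₁) (V i ⬝ᵥ θstar)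
    exact ⟨c, hc1, by rw [hc2, hVw]⟩
  choose g hgκ hgeq using hgex
  -- Q = w M w
  set Q : ℝ := ∑ i, (V i ⬝ᵥ w) ^ 2 with hQ
  have hMw : M *ᵥ w = ∑ i, (V i ⬝ᵥ w) • V i := by
    rw [hMdef, sum_mv]
    exact Finset.sum_congr rfl fun i _ => vmv_mv _ _ _
  have hwMw : w ⬝ᵥ (M *ᵥ w) = Q := by
    rw [hMw, dp_sum]
    refine Finset.sum_congr rfl fun i _ => ?_
    rw [dotProduct_smul, dotProduct_comm]
    simp only [pow_two, smul_eq_mul]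
  -- G dot w
  have hGw : G ⬝ᵥ w = ∑ i, g i * (V i ⬝ᵥ w) ^ 2 := by
    rw [hG, sum_dp]
    refine Finset.sum_congr rfl fun i _ => ?_
    rw [smul_dotProduct, hgeq i]
    simp [pow_two, smul_eq_mul]
    ring
  have hGwκ : κ * Q ≤ G ⬝ᵥ w := by
    rw [hGw, hQ, Finset.mul_sum]
    exact Finset.sum_le_sum fun i _ => by nlinarith [sq_nonneg (V i ⬝ᵥ w), hgκ i]
  have hQnonneg : 0 ≤ Q := Finset.sum_nonneg fun i _ => sq_nonneg _
  -- sum of squares = w ⬝ᵥ w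
  have hS : ∑ j, (θ₁ j - θstar j) ^ 2 = w ⬝ᵥ w := by
    simp [hw, dotProduct, pow_two]
  rcases eq_or_ne w 0 with hw0 | hw0
  · rw [hS, hw0]
    simpa using hRnonneg
  · -- Q > 0
    have hQpos : 0 < Q := by
      rw [← hwMw]
      simpa using hM.dotProduct_mulVec_pos hw0
    -- Cauchy-Schwarz
    have hCS := psd_cauchy_schwarz hMinvPS G (M *ᵥ w)
    have hMiMw : M⁻¹ *ᵥ (M *ᵥ w) = w := by
      rw [Matrix.mulVec_mulVec, hMinvM, Matrix.one_mulVec]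
    rw [hMiMw] at hCS
    have hMwQ : (M *ᵥ w) ⬝ᵥ w = Q := by rw [dotProduct_comm, hwMw]
    rw [hMwQ] at hCS
    -- (G ⬝ᵥ w)^2 ≤ R * Q, and κQ ≤ G⬝ᵥw, κQ ≥ 0
    have h1 : (κ * Q) ^ 2 ≤ (G ⬝ᵥ (M⁻¹ *ᵥ G)) * Q := by
      calc (κ * Q)^2 ≤ (G ⬝ᵥ w)^2 := by
            apply pow_le_pow_left₀ (by positivity) hGwκ 2
        _ ≤ _ := hCS
    have h2 : κ ^ 2 * Q ≤ G ⬝ᵥ (M⁻¹ *ᵥ G) := by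
      have := (div_le_div_iff_of_pos_right hQpos).mpr h1
      nlinarith
    have h3 : lmin * (w ⬝ᵥ w) ≤ Q := by
      rw [← hwMw]
      exact eigen_lower_bound hd hM.1 w
    calc κ ^ 2 * lmin * (∑ j, (θ₁ j - θstar j) ^ 2)
        = κ ^ 2 * (lmin * (w ⬝ᵥ w)) := by rw [hS]; ring
      _ ≤ κ ^ 2 * Q := by nlinarith [sq_nonneg κ]
      _ ≤ _ := h2
end
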